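/- Let φ: ℝ → ℝ be convex and l: ℝ → ℝ be convex. For τ ≥ 0, set γ = (∂_max φ(τ/2) - ∂_min φ(-τ/2)) - (∂_max l(τ) - ∂_min l(-τ)). Then ∫_{-τ}^{τ} |φ(α) - l(α)| dα ≥ τ² γ / 32. -/

import Mathlib

open Set intervalIntegral

/-- The subdifferential of `φ : ℝ → ℝ` at `x`. -/
def subgrad (φ : ℝ → ℝ) (x : ℝ) : Set ℝ :=
  {g : ℝ | ∀ y : ℝ, φ x + g * (y - x) ≤ φ y}

private lemma chord_aux {f : ℝ → ℝ} (hf : ConvexOn ℝ Set.univ f) {x y α : ℝ}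
    (h1 : x ≤ α) (h2 : α ≤ y) :
    f α * (y - x) ≤ f x * (y - α) + f y * (α - x) := by
  rcases h1.eq_or_lt with rfl | h1
  · nlinarith
  rcases h2.eq_or_lt with rfl | h2
  · nlinarith
  have hs := hf.slope_mono_adjacent (Set.mem_univ x) (Set.mem_univ y) h1 h2
  rw [div_le_div_iff₀ (by linarith) (by linarith)] at hs
  nlinarith [hs]

private lemma right_ext_aux {f : ℝ → ℝ} (hf : ConvexOn ℝ Set.univ f) {x y α : ℝ}
    (h1 : x < y) (h2 : y ≤ α) :
    f y * (α - x) ≤ f x * (α - y) + f α * (y - x) := by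
  rcases h2.eq_or_lt with rfl | h2
  · nlinarith
  have hs := hf.slope_mono_adjacent (Set.mem_univ x) (Set.mem_univ α) h1 h2
  rw [div_le_div_iff₀ (by linarith) (by linarith)] at hs
  nlinarith [hs]

private lemma left_ext_aux {f : ℝ → ℝ} (hf : ConvexOn ℝ Set.univ f) {x y α : ℝ}
    (h1 : α ≤ x) (h2 : x < y) :
    f x * (y - α) ≤ f α * (y - x) + f y * (x - α) := by
  rcases h1.eq_or_lt with rfl | h1
  · nlinarith
  have hs := hf.slope_mono_adjacent (Set.mem_univ α) (Set.mem_univ y) h1 h2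
  rw [div_le_div_iff₀ (by linarith) (by linarith)] at hs
  nlinarith [hs]

private lemma int_affine (c s a b : ℝ) :
    (∫ α in a..b, (c + s * α)) = c * (b - a) + s * ((b ^ 2 - a ^ 2) / 2) := by
  have h : (∫ α in a..b, (c + s * α)) = (∫ _α in a..b, c) + ∫ α in a..b, s * α :=
    intervalIntegral.integral_add intervalIntegrable_const
      ((by fun_prop : Continuous fun α : ℝ => s * α).intervalIntegrable _ _)
  rw [h, intervalIntegral.integral_const, intervalIntegral.integral_const_mul, integral_id]
  simp [smul_eq_mul]; ring

private lemma lemR {f : ℝ → ℝ} (hf : ConvexOn ℝ Set.univ f) (hc : Continuous f)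
    {x δ p : ℝ} (hδ : 0 < δ) (hp : p ∈ subgrad f x) :
    p * δ ^ 2 ≤ (∫ α in (x + δ)..(x + 2 * δ), f α) - ∫ α in x..(x + δ), f α := by
  set s : ℝ := (f (x + δ) - f x) / δ with hs
  have hfs : f (x + δ) = f x + s * δ := by rw [hs, div_mul_cancel₀ _ hδ.ne']; ring
  have hps : p * δ ≤ s * δ := by
    have h := hp (x + δ)
    nlinarith [h]
  have h1 : (∫ α in x..(x + δ), f α) ≤ ∫ α in x..(x + δ), ((f x - s * x) + s * α) := by
    apply intervalIntegral.integral_mono_on (by linarith) (hc.intervalIntegrable _ _)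
      ((by fun_prop : Continuous fun α : ℝ => (f x - s * x) + s * α).intervalIntegrable _ _)
    intro α hα
    have hb := chord_aux hf hα.1 hα.2
    rw [hfs] at hb
    exact le_of_mul_le_mul_right (by nlinarith [hb]) hδ
  have h2 : (∫ α in (x + δ)..(x + 2 * δ), ((f (x + δ) - s * (x + δ)) + s * α))
      ≤ ∫ α in (x + δ)..(x + 2 * δ), f α := by
    apply intervalIntegral.integral_mono_on (by linarith)
      ((by fun_prop : Continuous fun α : ℝ => (f (x + δ) - s * (x + δ)) + s * α).intervalIntegrable _ _)
      (hc.intervalIntegrable _ _)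
    intro α hα
    have hb := right_ext_aux hf (show x < x + δ by linarith) hα.1
    rw [hfs] at hb
    exact le_of_mul_le_mul_right (by nlinarith [hb]) hδ
  rw [int_affine] at h1 h2
  nlinarith [h1, h2, hps, mul_le_mul_of_nonneg_right hps hδ.le]

private lemma lemR' {f : ℝ → ℝ} (hf : ConvexOn ℝ Set.univ f) (hc : Continuous f)
    {x δ p : ℝ} (hδ : 0 < δ) (hp : p ∈ subgrad f (x + 2 * δ)) :
    (∫ α in (x + δ)..(x + 2 * δ), f α) - (∫ α in x..(x + δ), f α) ≤ p * δ ^ 2 := by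
  set s : ℝ := (f (x + 2 * δ) - f (x + δ)) / δ with hs
  have hfs : f (x + 2 * δ) = f (x + δ) + s * δ := by rw [hs, div_mul_cancel₀ _ hδ.ne']; ring
  have hps : s * δ ≤ p * δ := by
    have h := hp (x + δ)
    nlinarith [h]
  have h1 : (∫ α in (x + δ)..(x + 2 * δ), f α)
      ≤ ∫ α in (x + δ)..(x + 2 * δ), ((f (x + δ) - s * (x + δ)) + s * α) := by
    apply intervalIntegral.integral_mono_on (by linarith) (hc.intervalIntegrable _ _)
      ((by fun_prop : Continuous fun α : ℝ => (f (x + δ) - s * (x + δ)) + s * α).intervalIntegrable _ _)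
    intro α hα
    have hb := chord_aux hf hα.1 hα.2
    rw [hfs] at hb
    exact le_of_mul_le_mul_right (by nlinarith [hb]) hδ
  have h2 : (∫ α in x..(x + δ), ((f (x + δ) - s * (x + δ)) + s * α))
      ≤ ∫ α in x..(x + δ), f α := by
    apply intervalIntegral.integral_mono_on (by linarith)
      ((by fun_prop : Continuous fun α : ℝ => (f (x + δ) - s * (x + δ)) + s * α).intervalIntegrable _ _)
      (hc.intervalIntegrable _ _)
    intro α hα
    have hb := left_ext_aux hf hα.2 (show x + δ < x + 2 * δ by linarith)
    rw [hfs] at hb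
    exact le_of_mul_le_mul_right (by nlinarith [hb]) hδ
  rw [int_affine] at h1 h2
  nlinarith [h1, h2, mul_le_mul_of_nonneg_right hps hδ.le]

private lemma convexOn_neg_comp {f : ℝ → ℝ} (hf : ConvexOn ℝ Set.univ f) :
    ConvexOn ℝ Set.univ (fun α => f (-α)) := by
  refine ⟨convex_univ, fun x _ y _ a b ha hb hab => ?_⟩
  have h := hf.2 (Set.mem_univ (-x)) (Set.mem_univ (-y)) ha hb hab
  have e : a • (-x) + b • (-y) = -(a • x + b • y) := by
    simp [smul_eq_mul]; ring
  rw [e] at h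
  exact h

private lemma subgrad_neg_comp {f : ℝ → ℝ} {x p : ℝ} (hp : p ∈ subgrad f x) :
    -p ∈ subgrad (fun α => f (-α)) (-x) := by
  intro y
  have h := hp (-y)
  simp only [neg_neg]
  have e : -p * (y - -x) = p * (-y - x) := by ring
  rw [e]
  exact h

/-- Non-smooth convex function vs convex function, integral form. -/
theorem stmt_2 (φ l : ℝ → ℝ) (hφ : ConvexOn ℝ Set.univ φ) (hl : ConvexOn ℝ Set.univ l)
    (τ : ℝ) (hτ : 0 ≤ τ)
    (pφ qφ pl ql γ : ℝ)
    (hpφ : IsGreatest (subgrad φ (τ / 2)) pφ)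
    (hqφ : IsLeast (subgrad φ (-(τ / 2))) qφ)
    (hpl : IsGreatest (subgrad l τ) pl)
    (hql : IsLeast (subgrad l (-τ)) ql)
    (hγ : γ = (pφ - qφ) - (pl - ql)) :
    τ ^ 2 * γ / 32 ≤ ∫ α in (-τ)..τ, |φ α - l α| := by
  have cφ : Continuous φ := hφ.locallyLipschitz.continuous
  have cl : Continuous l := hl.locallyLipschitz.continuous
  have habs : Continuous fun α => |φ α - l α| := (cφ.sub cl).abs
  rcases le_or_gt γ 0 with hγ0 | hγ0
  · have h0 : 0 ≤ ∫ α in (-τ)..τ, |φ α - l α| :=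
      intervalIntegral.integral_nonneg (by linarith) (fun u _ => abs_nonneg _)
    nlinarith [sq_nonneg τ]
  rcases hτ.eq_or_lt with rfl | hτ0
  · simp
  have hδ : (0:ℝ) < τ / 4 := by linarith
  -- right-hand estimates
  have hR1 : pφ * (τ / 4) ^ 2 ≤
      (∫ α in (3 * τ / 4)..τ, φ α) - ∫ α in (τ / 2)..(3 * τ / 4), φ α := by
    have h := lemR hφ cφ hδ hpφ.1
    rwa [show τ / 2 + τ / 4 = 3 * τ / 4 by ring, show τ / 2 + 2 * (τ / 4) = τ by ring] at h
  have hR2 : (∫ α in (3 * τ / 4)..τ, l α) - (∫ α in (τ / 2)..(3 * τ / 4), l α)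
      ≤ pl * (τ / 4) ^ 2 := by
    have hmem : pl ∈ subgrad l (τ / 2 + 2 * (τ / 4)) := by
      rw [show τ / 2 + 2 * (τ / 4) = τ by ring]; exact hpl.1
    have h := lemR' hl cl hδ hmem
    rwa [show τ / 2 + τ / 4 = 3 * τ / 4 by ring, show τ / 2 + 2 * (τ / 4) = τ by ring] at h
  -- left-hand estimates via reflection
  have hq' : -qφ ∈ subgrad (fun α => φ (-α)) (τ / 2) := by
    have h := subgrad_neg_comp hqφ.1
    rwa [neg_neg] at h
  have hL1 : (-qφ) * (τ / 4) ^ 2 ≤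
      (∫ α in (-τ)..(-(3 * τ / 4)), φ α) - ∫ α in (-(3 * τ / 4))..(-(τ / 2)), φ α := by
    have h := lemR (convexOn_neg_comp hφ) (cφ.comp continuous_neg) hδ hq'
    rw [show τ / 2 + τ / 4 = 3 * τ / 4 by ring, show τ / 2 + 2 * (τ / 4) = τ by ring] at h
    rwa [intervalIntegral.integral_comp_neg, intervalIntegral.integral_comp_neg] at h
  have hq2' : -ql ∈ subgrad (fun α => l (-α)) (τ / 2 + 2 * (τ / 4)) := by
    rw [show τ / 2 + 2 * (τ / 4) = τ by ring]
    have h := subgrad_neg_comp hql.1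
    rwa [neg_neg] at h
  have hL2 : (∫ α in (-τ)..(-(3 * τ / 4)), l α) - (∫ α in (-(3 * τ / 4))..(-(τ / 2)), l α)
      ≤ (-ql) * (τ / 4) ^ 2 := by
    have h := lemR' (convexOn_neg_comp hl) (cl.comp continuous_neg) hδ hq2'
    rw [show τ / 2 + τ / 4 = 3 * τ / 4 by ring, show τ / 2 + 2 * (τ / 4) = τ by ring] at h
    rwa [intervalIntegral.integral_comp_neg, intervalIntegral.integral_comp_neg] at h
  -- splitting the integral
  have iInt : ∀ a b : ℝ, IntervalIntegrable (fun α => |φ α - l α|) MeasureTheory.volume a b :=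
    fun a b => habs.intervalIntegrable a b
  have e1 : (∫ α in (-τ)..(-(3 * τ / 4)), |φ α - l α|)
      + (∫ α in (-(3 * τ / 4))..τ, |φ α - l α|) = ∫ α in (-τ)..τ, |φ α - l α| :=
    intervalIntegral.integral_add_adjacent_intervals (iInt _ _) (iInt _ _)
  have e2 : (∫ α in (-(3 * τ / 4))..(-(τ / 2)), |φ α - l α|)
      + (∫ α in (-(τ / 2))..τ, |φ α - l α|) = ∫ α in (-(3 * τ / 4))..τ, |φ α - l α| :=
    intervalIntegral.integral_add_adjacent_intervals (iInt _ _) (iInt _ _)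
  have e3 : (∫ α in (-(τ / 2))..(τ / 2), |φ α - l α|)
      + (∫ α in (τ / 2)..τ, |φ α - l α|) = ∫ α in (-(τ / 2))..τ, |φ α - l α| :=
    intervalIntegral.integral_add_adjacent_intervals (iInt _ _) (iInt _ _)
  have e4 : (∫ α in (τ / 2)..(3 * τ / 4), |φ α - l α|)
      + (∫ α in (3 * τ / 4)..τ, |φ α - l α|) = ∫ α in (τ / 2)..τ, |φ α - l α| :=
    intervalIntegral.integral_add_adjacent_intervals (iInt _ _) (iInt _ _)
  -- pointwise piece bounds
  have pieceP : ∀ a b : ℝ, a ≤ b →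
      (∫ α in a..b, φ α) - (∫ α in a..b, l α) ≤ ∫ α in a..b, |φ α - l α| := by
    intro a b hab
    rw [← intervalIntegral.integral_sub (cφ.intervalIntegrable _ _) (cl.intervalIntegrable _ _)]
    exact intervalIntegral.integral_mono_on hab
      ((cφ.sub cl).intervalIntegrable _ _) (iInt _ _) (fun x _ => le_abs_self _)
  have pieceN : ∀ a b : ℝ, a ≤ b →
      (∫ α in a..b, l α) - (∫ α in a..b, φ α) ≤ ∫ α in a..b, |φ α - l α| := by
    intro a b hab
    rw [← intervalIntegral.integral_sub (cl.intervalIntegrable _ _) (cφ.intervalIntegrable _ _)]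
    refine intervalIntegral.integral_mono_on hab
      ((cl.sub cφ).intervalIntegrable _ _) (iInt _ _) (fun x _ => ?_)
    rw [abs_sub_comm]
    exact le_abs_self _
  have p1 := pieceP (-τ) (-(3 * τ / 4)) (by linarith)
  have p2 := pieceN (-(3 * τ / 4)) (-(τ / 2)) (by linarith)
  have p3 : (0:ℝ) ≤ ∫ α in (-(τ / 2))..(τ / 2), |φ α - l α| :=
    intervalIntegral.integral_nonneg (by linarith) (fun u _ => abs_nonneg _)
  have p4 := pieceN (τ / 2) (3 * τ / 4) (by linarith)
  have p5 := pieceP (3 * τ / 4) τ (by linarith)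
  have key : γ * (τ / 4) ^ 2 ≤ ∫ α in (-τ)..τ, |φ α - l α| := by
    rw [hγ]
    nlinarith [hR1, hR2, hL1, hL2, e1, e2, e3, e4, p1, p2, p3, p4, p5]
  nlinarith [key, mul_nonneg hγ0.le (sq_nonneg τ)]
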